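/- arXiv:2603.13225 — 2 statements merged into one kernel-verified Lean document; each statement's English description precedes it below -/
import Mathlib

section
/- For n ≥ 0, |Oct_n| = 1 + 4(w_n − 2) + 4(w_n − 2)² − 2(w_{n+2} − w_{n+1})(w_{n+2} − w_{n+1} − 1). -/
/-- The sequence `w_{2k} = 3·2^k`, `w_{2k+1} = 4·2^k`. -/
def w (n : ℕ) : ℤ := if n % 2 = 0 then 3 * 2 ^ (n / 2) else 4 * 2 ^ (n / 2)

/-- `E a b` : lattice points with `|x| ≤ a`, `|y| ≤ a`, `|x|+|y| ≤ b`. -/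
noncomputable def E (a b : ℤ) : Finset (ℤ × ℤ) :=
  (Finset.Icc (-a) a ×ˢ Finset.Icc (-a) a).filter fun p => |p.1| + |p.2| ≤ b

noncomputable def Oct (n : ℕ) : Finset (ℤ × ℤ) := E (w n - 2) (w (n + 1) - 3)

noncomputable def S (n : ℕ) : Finset (ℤ × ℤ) := (Oct n).filter fun p => ¬ (2 ∣ p.1 ∧ 2 ∣ p.2)

open Finset in
lemma sum_Ioc_split (f : ℤ → ℤ) {m n k : ℤ} (hmn : m ≤ n) (hnk : n ≤ k) :
    (∑ i ∈ Ioc m n, f i) + ∑ i ∈ Ioc n k, f i = ∑ i ∈ Ioc m k, f i := by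
  rw [← Ioc_union_Ioc_eq_Ioc hmn hnk, sum_union]
  apply disjoint_left.2
  intro x hx h'x
  exact absurd (mem_Ioc.1 h'x).1 (not_lt.2 (mem_Ioc.1 hx).2)

lemma sum_Icc_int (l : ℤ) (n : ℕ) :
    (2:ℤ) * ∑ x ∈ Finset.Icc l (l + n), x = (n+1) * (2*l + n) := by
  induction n with
  | zero => simp
  | succ n ih =>
    have h2 : Finset.Icc l (l + ((n:ℤ)+1)) = insert (l + n + 1) (Finset.Icc l (l + n)) := by
      ext x; simp [Finset.mem_Icc]; omega
    push_cast
    rw [h2, Finset.sum_insert (by simp [Finset.mem_Icc]), mul_add, ih]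
    ring

lemma fiber_eq (a b x : ℤ) (hx : |x| ≤ a) :
    (E a b).filter (fun p => p.1 = x) =
      (Finset.Icc (-(min a (b - |x|))) (min a (b - |x|))).image (fun y => (x, y)) := by
  ext p
  simp only [E, Finset.mem_filter, Finset.mem_product, Finset.mem_Icc, Finset.mem_image,
    ← abs_le]
  constructor
  · rintro ⟨⟨⟨h1, h2⟩, h3⟩, rfl⟩
    exact ⟨p.2, le_min h2 (by omega), rfl⟩
  · rintro ⟨y, hy, rfl⟩
    have h1 := le_trans hy (min_le_left _ _)
    have h2 := le_trans hy (min_le_right _ _)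
    exact ⟨⟨⟨hx, h1⟩, show |x| + |y| ≤ b by omega⟩, rfl⟩

lemma fiber_card (a b x : ℤ) (hx : |x| ≤ a) (hab : a ≤ b) :
    (((E a b).filter (fun p => p.1 = x)).card : ℤ) = 2 * min a (b - |x|) + 1 := by
  have h0 : (0:ℤ) ≤ min a (b - |x|) :=
    le_min (le_trans (abs_nonneg x) hx) (by have := abs_nonneg x; omega)
  rw [fiber_eq a b x hx, Finset.card_image_of_injective _ (by intro u v h; simpa using h)]
  rw [Int.card_Icc, Int.toNat_of_nonneg (by omega)]
  ring

open Finset in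
lemma card_E (a b : ℤ) (hab : a ≤ b) (hb2 : b < 2*a) :
    ((E a b).card : ℤ) = (2*a+1)^2 - 2*(2*a-b)*(2*a-b+1) := by
  have ha : 0 < a := by omega
  set c : ℤ := b - a with hc
  have hc0 : 0 ≤ c := by omega
  have hca : c + 1 ≤ a := by omega
  have h1 : (E a b).card = ∑ x ∈ Icc (-a) a, ((E a b).filter (fun p => p.1 = x)).card := by
    apply Finset.card_eq_sum_card_fiberwise
    intro p hp
    simp only [E, Finset.mem_filter, Finset.mem_product] at hp
    exact (Finset.mem_product.1 (Finset.mem_filter.1 (show p ∈ E a b from hp)).1).1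
  have h2 : ((E a b).card : ℤ) = ∑ x ∈ Icc (-a) a, (2 * min a (b - |x|) + 1) := by
    rw [h1]
    push_cast
    refine Finset.sum_congr rfl fun x hx => ?_
    rw [Finset.mem_Icc, ← abs_le] at hx
    exact fiber_card a b x hx hab
  rw [h2]
  set g : ℤ → ℤ := fun x => 2 * min a (b - |x|) + 1 with hg
  have e1 : Icc (-a) a = Ioc (-a-1) a := by ext x; simp [Finset.mem_Icc, Finset.mem_Ioc]
  have split1 := sum_Ioc_split g (by omega : -a-1 ≤ -(c+1)) (by omega : -(c+1) ≤ (a:ℤ))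
  have split2 := sum_Ioc_split g (by omega : -(c+1) ≤ c) (by omega : c ≤ a)
  have e2 : Ioc (-a-1) (-(c+1)) = Icc (-a) (-(c+1)) := by
    ext x; simp [Finset.mem_Icc, Finset.mem_Ioc]
  have e3 : Ioc (-(c+1)) c = Icc (-c) c := by
    ext x; simp [Finset.mem_Icc, Finset.mem_Ioc]; omega
  have e4 : Ioc c a = Icc (c+1) a := by
    ext x; simp [Finset.mem_Icc, Finset.mem_Ioc]
  rw [e1, ← split1, ← split2, e2, e3, e4]
  have hmid : ∑ x ∈ Icc (-c) c, g x = (2*c+1) * (2*a+1) := by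
    have : ∀ x ∈ Icc (-c) c, g x = 2*a+1 := by
      intro x hx
      rw [Finset.mem_Icc, ← abs_le] at hx
      have : min a (b - |x|) = a := min_eq_left (by omega)
      simp [hg, this]
    rw [Finset.sum_congr rfl this, Finset.sum_const, nsmul_eq_mul, Int.card_Icc,
      Int.toNat_of_nonneg (by omega)]
    ring
  have hn : (((a - c - 1).toNat : ℤ)) = a - c - 1 := Int.toNat_of_nonneg (by omega)
  have hR : 2 * ∑ x ∈ Icc (c+1) a, x = (a - c) * (a + c + 1) := by
    have h := sum_Icc_int (c+1) (a - c - 1).toNat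
    rw [hn, show c + 1 + (a - c - 1) = a from by ring] at h
    rw [h]; ring
  have hL : 2 * ∑ x ∈ Icc (-a) (-(c+1)), x = -((a - c) * (a + c + 1)) := by
    have h := sum_Icc_int (-a) (a - c - 1).toNat
    rw [hn, show -a + (a - c - 1) = -(c+1) from by ring] at h
    rw [h]; ring
  have hright : 2 * ∑ x ∈ Icc (c+1) a, g x = 2*((2*b+1) * (a - c)) - 2*((a-c)*(a+c+1)) := by
    have hcong : ∀ x ∈ Icc (c+1) a, g x = (2*b+1) + (-2)*x := by
      intro x hx
      rw [Finset.mem_Icc] at hx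
      have hxpos : 0 < x := by omega
      have habs : |x| = x := abs_of_pos hxpos
      have : min a (b - |x|) = b - x := by rw [habs]; exact min_eq_right (by omega)
      simp [hg, this]; ring
    rw [Finset.sum_congr rfl hcong, Finset.sum_add_distrib, Finset.sum_const, nsmul_eq_mul,
      ← Finset.mul_sum, Int.card_Icc, Int.toNat_of_nonneg (by omega)]
    linear_combination -2 * hR
  have hleft : 2 * ∑ x ∈ Icc (-a) (-(c+1)), g x = 2*((2*b+1) * (a - c)) - 2*((a-c)*(a+c+1)) := by
    have hcong : ∀ x ∈ Icc (-a) (-(c+1)), g x = (2*b+1) + 2*x := by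
      intro x hx
      rw [Finset.mem_Icc] at hx
      have hxneg : x < 0 := by omega
      have habs : |x| = -x := abs_of_neg hxneg
      have : min a (b - |x|) = b + x := by
        rw [habs]; rw [show b - -x = b + x from by ring]; exact min_eq_right (by omega)
      simp [hg, this]; ring
    rw [Finset.sum_congr rfl hcong, Finset.sum_add_distrib, Finset.sum_const, nsmul_eq_mul,
      ← Finset.mul_sum, Int.card_Icc, Int.toNat_of_nonneg (by omega)]
    linear_combination 2 * hL
  have goal2 : 2 * ((∑ x ∈ Icc (-a) (-(c+1)), g x) + ((∑ x ∈ Icc (-c) c, g x) + ∑ x ∈ Icc (c+1) a, g x))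
      = 2 * ((2*a+1)^2 - 2*(2*a-b)*(2*a-b+1)) := by
    rw [mul_add, mul_add, hmid, hright, hleft, hc]
    ring
  omega

lemma w_even (k : ℕ) : w (2*k) = 3 * 2 ^ k := by
  simp [w, Nat.mul_mod_right, Nat.mul_div_cancel_left _ (by norm_num : 0 < 2)]

lemma w_odd (k : ℕ) : w (2*k+1) = 4 * 2 ^ k := by
  have h1 : (2*k+1) % 2 = 1 := by omega
  have h2 : (2*k+1) / 2 = k := by omega
  simp [w, h1, h2]

theorem stmt_3 (n : ℕ) :
    ((Oct n).card : ℤ) = 1 + 4 * (w n - 2) + 4 * (w n - 2) ^ 2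
      - 2 * (w (n + 2) - w (n + 1)) * (w (n + 2) - w (n + 1) - 1) := by
  rcases Nat.even_or_odd n with ⟨k, hk⟩ | ⟨k, hk⟩
  · subst hk
    rw [show k + k = 2*k from by ring] at *
    have e1 := w_even k
    have e2 := w_odd k
    have e3 : w (2*k+2) = 3 * 2^(k+1) := by rw [show 2*k+2 = 2*(k+1) from by ring, w_even]
    have hp : (1:ℤ) ≤ 2 ^ k := one_le_pow₀ (by norm_num)
    rw [show (2*k+1+1) = 2*k+2 from rfl] at *
    rw [Oct, e1, e2, e3, card_E _ _ (by omega) (by omega)]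
    push_cast [pow_succ] at *
    ring
  · subst hk
    have e1 := w_odd k
    have e2 : w (2*k+1+1) = 3 * 2^(k+1) := by rw [show 2*k+1+1 = 2*(k+1) from by ring, w_even]
    have e3 : w (2*k+1+2) = 4 * 2^(k+1) := by rw [show 2*k+1+2 = 2*(k+1)+1 from by ring, w_odd]
    have hp : (1:ℤ) ≤ 2 ^ k := one_le_pow₀ (by norm_num)
    rw [Oct, e1, e2, e3, card_E _ _ (by push_cast [pow_succ]; omega) (by push_cast [pow_succ]; omega)]
    push_cast [pow_succ] at *
    ring
end

section
/- For n ≥ 1, the set of points x+yi in Oct_n with x and y both even is in bijection with (and has the same cardinality as) E_{w_{n−2}−1, w_{n−1}−2}, via (x,y) ↦ (x/2, y/2). -/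
lemma w_add_two (m : ℕ) : w (m + 2) = 2 * w m := by
  unfold w
  have h1 : (m + 2) % 2 = m % 2 := by omega
  have h2 : (m + 2) / 2 = m / 2 + 1 := by omega
  rw [h1, h2]
  split <;> ring

lemma main_bij (a b A B : ℤ) (hb : b = 2 * B + 1) (hA1 : a ≤ 2 * A)
    (hA2 : ∀ t : ℤ, 0 ≤ t → t ≤ A → t ≤ B → 2 * t ≤ a) :
    Set.BijOn (fun p : ℤ × ℤ => (p.1 / 2, p.2 / 2))
      (((E a b).filter fun p : ℤ × ℤ => 2 ∣ p.1 ∧ 2 ∣ p.2) : Set (ℤ × ℤ))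
      ((E A B) : Set (ℤ × ℤ)) ∧
    ((E a b).filter fun p : ℤ × ℤ => 2 ∣ p.1 ∧ 2 ∣ p.2).card = (E A B).card := by
  have hmem1 : ∀ p : ℤ × ℤ,
      (p ∈ (E a b).filter fun p : ℤ × ℤ => 2 ∣ p.1 ∧ 2 ∣ p.2) ↔
      ((-a ≤ p.1 ∧ p.1 ≤ a) ∧ (-a ≤ p.2 ∧ p.2 ≤ a) ∧ |p.1| + |p.2| ≤ b
        ∧ 2 ∣ p.1 ∧ 2 ∣ p.2) := by
    intro p
    simp [E, Finset.mem_filter, Finset.mem_product, Finset.mem_Icc]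
    tauto
  have hmem2 : ∀ p : ℤ × ℤ, (p ∈ E A B) ↔
      ((-A ≤ p.1 ∧ p.1 ≤ A) ∧ (-A ≤ p.2 ∧ p.2 ≤ A) ∧ |p.1| + |p.2| ≤ B) := by
    intro p
    simp [E, Finset.mem_filter, Finset.mem_product, Finset.mem_Icc]
    tauto
  have hbij : Set.BijOn (fun p : ℤ × ℤ => (p.1 / 2, p.2 / 2))
      (((E a b).filter fun p : ℤ × ℤ => 2 ∣ p.1 ∧ 2 ∣ p.2) : Set (ℤ × ℤ))
      ((E A B) : Set (ℤ × ℤ)) := by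
    refine ⟨?_, ?_, ?_⟩
    · intro p hp
      rw [Finset.mem_coe, hmem1] at hp
      obtain ⟨⟨h1, h2⟩, ⟨h3, h4⟩, h5, ⟨u, hu⟩, ⟨v, hv⟩⟩ := hp
      have hp1 : p.1 / 2 = u := by omega
      have hp2 : p.2 / 2 = v := by omega
      simp only [Finset.mem_coe]
      show ((p.1 / 2, p.2 / 2) : ℤ × ℤ) ∈ E A B
      rw [hmem2, hp1, hp2]
      have h5' : |2 * u| + |2 * v| ≤ b := by rw [← hu, ← hv]; exact h5
      rw [abs_mul, abs_mul] at h5'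
      simp only [abs_two] at h5'
      rcases abs_choice u with hau | hau <;> rcases abs_choice v with hav | hav <;>
        rw [hau, hav] at h5' ⊢ <;> omega
    · intro p hp q hq hpq
      rw [Finset.mem_coe, hmem1] at hp hq
      obtain ⟨-, -, -, ⟨u, hu⟩, ⟨v, hv⟩⟩ := hp
      obtain ⟨-, -, -, ⟨u', hu'⟩, ⟨v', hv'⟩⟩ := hq
      have h1 : p.1 / 2 = q.1 / 2 := congrArg Prod.fst hpq
      have h2 : p.2 / 2 = q.2 / 2 := congrArg Prod.snd hpq
      have : p.1 = q.1 := by omega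
      have : p.2 = q.2 := by omega
      exact Prod.ext ‹p.1 = q.1› ‹p.2 = q.2›
    · intro q hq
      rw [Finset.mem_coe, hmem2] at hq
      obtain ⟨⟨h1, h2⟩, ⟨h3, h4⟩, h5⟩ := hq
      refine ⟨(2 * q.1, 2 * q.2), ?_, ?_⟩
      · rw [Finset.mem_coe, hmem1]
        dsimp only
        have k1 : 2 * |q.1| ≤ a := by
          refine hA2 _ (abs_nonneg _) (abs_le.mpr ⟨h1, h2⟩) ?_
          have := abs_nonneg q.2
          linarith
        have k2 : 2 * |q.2| ≤ a := by
          refine hA2 _ (abs_nonneg _) (abs_le.mpr ⟨h3, h4⟩) ?_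
          have := abs_nonneg q.1
          linarith
        refine ⟨?_, ?_, ?_, ⟨q.1, rfl⟩, ⟨q.2, rfl⟩⟩
        · constructor <;> linarith [le_abs_self q.1, neg_abs_le q.1]
        · constructor <;> linarith [le_abs_self q.2, neg_abs_le q.2]
        · rw [abs_mul, abs_mul]
          simp only [abs_two]
          linarith
      · show ((2 * q.1 / 2, 2 * q.2 / 2) : ℤ × ℤ) = q
        have e1 : 2 * q.1 / 2 = q.1 := by omega
        have e2 : 2 * q.2 / 2 = q.2 := by omega
        rw [e1, e2]
  refine ⟨hbij, ?_⟩
  have himg : ((E a b).filter fun p : ℤ × ℤ => 2 ∣ p.1 ∧ 2 ∣ p.2).image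
      (fun p : ℤ × ℤ => (p.1 / 2, p.2 / 2)) = E A B := by
    apply Finset.coe_injective
    rw [Finset.coe_image]
    exact hbij.image_eq
  calc ((E a b).filter fun p : ℤ × ℤ => 2 ∣ p.1 ∧ 2 ∣ p.2).card
      = (((E a b).filter fun p : ℤ × ℤ => 2 ∣ p.1 ∧ 2 ∣ p.2).image
          (fun p : ℤ × ℤ => (p.1 / 2, p.2 / 2))).card :=
        (Finset.card_image_of_injOn hbij.injOn).symm
    _ = (E A B).card := by rw [himg]

theorem stmt_6 (n : ℕ) (hn : 1 ≤ n) :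
    Set.BijOn (fun p : ℤ × ℤ => (p.1 / 2, p.2 / 2))
      (((Oct n).filter fun p : ℤ × ℤ => 2 ∣ p.1 ∧ 2 ∣ p.2) : Set (ℤ × ℤ))
      ((E (w (n - 2) - 1) (w (n - 1) - 2)) : Set (ℤ × ℤ)) ∧
    ((Oct n).filter fun p : ℤ × ℤ => 2 ∣ p.1 ∧ 2 ∣ p.2).card
      = (E (w (n - 2) - 1) (w (n - 1) - 2)).card := by
  unfold Oct
  apply main_bij
  · -- b = 2 * B + 1
    obtain ⟨m, rfl⟩ : ∃ m, n = m + 1 := ⟨n - 1, by omega⟩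
    have h : w (m + 1 + 1) = 2 * w m := w_add_two m
    simp only [Nat.add_sub_cancel]
    omega
  · -- a ≤ 2 * A
    obtain ⟨m, rfl⟩ : ∃ m, n = m + 1 := ⟨n - 1, by omega⟩
    match m with
    | 0 => norm_num [w]
    | Nat.succ k =>
      have h : w (k + 1 + 1) = 2 * w k := w_add_two k
      show w (k + 1 + 1) - 2 ≤ 2 * (w k - 1)
      omega
  · -- hA2
    intro t ht0 htA htB
    obtain ⟨m, rfl⟩ : ∃ m, n = m + 1 := ⟨n - 1, by omega⟩
    match m with
    | 0 =>
      norm_num [w] at htB ⊢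
      omega
    | Nat.succ k =>
      have h : w (k + 1 + 1) = 2 * w k := w_add_two k
      have htA' : t ≤ w k - 1 := htA
      show 2 * t ≤ w (k + 1 + 1) - 2
      omega
end
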